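/- arXiv:2309.07070 — 5 statements merged into one kernel-verified Lean document; each statement's English description precedes it below -/
import Mathlib

section
/- For every n ≥ 3, the word p_n (the Fibonacci word f_n with its last two letters removed) is a palindrome. -/
/-- The Fibonacci morphism: `false` (=0) ↦ 01, `true` (=1) ↦ 0. -/
def phi (w : List Bool) : List Bool :=
  w.flatMap (fun b => if b then [false] else [false, true])

/-- The Fibonacci words: f₁ = 1, f₂ = 0, f_{n+2} = f_{n+1} f_n. -/
def fw : ℕ → List Bool
  | 0 => []
  | 1 => [true]
  | 2 => [false]
  | (n+3) => fw (n+2) ++ fw (n+1)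

/-- Palindromic prefix: f_n with its last two letters removed. -/
def pw (n : ℕ) : List Bool := (fw n).dropLast.dropLast

/-- Minimal forbidden words of the Fibonacci word:
`M_{2n+1} = 1 p_{2n+1} 1`, `M_{2n+2} = 0 p_{2n+2} 0`. -/
def Mw (n : ℕ) : List Bool :=
  if n % 2 = 0 then false :: (pw n ++ [false]) else true :: (pw n ++ [true])

/-- Correlation bit: `corr u v k` holds iff `C_{u,v}[k] = 1`. -/
def corr {α : Type*} (u v : List α) (k : ℕ) : Prop :=
  ∀ i j : ℕ, i < u.length → j < v.length → i = j + k → u[i]? = v[j]?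

/-- A border of a word is both a prefix and a suffix. -/
def IsBorder {α : Type*} (b w : List α) : Prop := b <+: w ∧ b <:+ w

/-- The set of nonempty borders of `M_n`. -/
def Bset (n : ℕ) : Set (List Bool) := {b | b ≠ [] ∧ IsBorder b (Mw n)}

open scoped Classical in
/-- The correlation polynomial `C_{u,v}(z) = ∑_{k<|u|} C_{u,v}[k] z^{|u|-1-k}`. -/
noncomputable def corrPoly (u v : List Bool) : Polynomial ℤ :=
  ∑ k ∈ Finset.range u.length,
    if corr u v k then Polynomial.X ^ (u.length - 1 - k) else 0

open scoped Classical in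
/-- The nonempty borders of `w`, as a finset. -/
noncomputable def borderFinset (w : List Bool) : Finset (List Bool) :=
  ((Finset.range (w.length + 1)).image (fun k => w.take k)).filter
    (fun b => b ≠ [] ∧ b <:+ w)

def tp (n : ℕ) : List Bool := if n % 2 = 0 then [true, false] else [false, true]

lemma tp_add_two (m : ℕ) : tp (m + 2) = tp m := by
  simp [tp, Nat.add_mod]

lemma tp_rev (m : ℕ) : (tp (m + 1)).reverse = tp m := by
  rcases Nat.mod_two_eq_zero_or_one m with h | h <;>
    simp [tp, h, Nat.add_mod] <;> omega

lemma drop2 (l : List Bool) (a b : Bool) :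
    ((l ++ [a, b]).dropLast.dropLast) = l := by
  have : l ++ [a, b] = (l ++ [a]) ++ [b] := by simp
  rw [this, List.dropLast_concat, List.dropLast_concat]

def Paux (m : ℕ) : Prop :=
  fw m = pw m ++ tp m ∧ fw m ++ pw (m + 1) = fw (m + 1) ++ pw m ∧
    (pw m).reverse = pw m

lemma key : ∀ n, Paux (n + 3) ∧ Paux (n + 4) := by
  intro n
  induction n with
  | zero => constructor <;> refine ⟨?_, ?_, ?_⟩ <;> decide
  | succ k ih =>
    obtain ⟨⟨A0, B0, C0⟩, ⟨A1, B1, C1⟩⟩ := ih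
    refine ⟨⟨A1, B1, C1⟩, ?_, ?_, ?_⟩
    · -- A (k+5)
      show fw (k + 5) = pw (k + 5) ++ tp (k + 5)
      have hfw : fw (k + 5) = fw (k + 4) ++ fw (k + 3) := rfl
      have hpw : pw (k + 5) = fw (k + 4) ++ pw (k + 3) := by
        rw [pw, hfw, A0]
        rcases Nat.mod_two_eq_zero_or_one (k + 3) with h | h <;>
          simp only [tp, h, if_true, if_false, Nat.one_ne_zero, ← List.append_assoc,
            drop2] <;> rfl
      rw [hfw, hpw, A0, show tp (k+5) = tp (k+3) from tp_add_two (k+3), List.append_assoc]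
    · -- B (k+5)
      show fw (k + 5) ++ pw (k + 6) = fw (k + 6) ++ pw (k + 5)
      have hpw5 : pw (k + 5) = fw (k + 4) ++ pw (k + 3) := by
        rw [pw, show fw (k+5) = fw (k+4) ++ fw (k+3) from rfl, A0]
        rcases Nat.mod_two_eq_zero_or_one (k + 3) with h | h <;>
          simp only [tp, h, if_true, if_false, Nat.one_ne_zero, ← List.append_assoc,
            drop2] <;> rfl
      have hpw6 : pw (k + 6) = fw (k + 5) ++ pw (k + 4) := by
        rw [pw, show fw (k+6) = fw (k+5) ++ fw (k+4) from rfl, A1]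
        rcases Nat.mod_two_eq_zero_or_one (k + 4) with h | h <;>
          simp only [tp, h, if_true, if_false, Nat.one_ne_zero, ← List.append_assoc,
            drop2] <;> rfl
      rw [hpw5, hpw6, show fw (k+6) = fw (k+5) ++ fw (k+4) from rfl,
        show fw (k+5) = fw (k+4) ++ fw (k+3) from rfl]
      simp only [List.append_assoc]
      rw [show k + 3 + 1 = k + 4 from rfl] at B0
      rw [B0]
    · -- C (k+5)
      show (pw (k + 5)).reverse = pw (k + 5)
      have hpw5 : pw (k + 5) = pw (k + 4) ++ tp (k + 4) ++ pw (k + 3) := by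
        rw [pw, show fw (k+5) = fw (k+4) ++ fw (k+3) from rfl, A0, A1]
        rcases Nat.mod_two_eq_zero_or_one (k + 3) with h | h <;>
          simp only [tp, h, if_true, if_false, Nat.one_ne_zero, ← List.append_assoc,
            drop2]
      rw [hpw5]
      simp only [List.reverse_append, C0, C1, List.append_assoc]
      rw [show k + 4 = (k + 3) + 1 from rfl, tp_rev, ← List.append_assoc, ← A0, B0,
        A1, tp_add_two, List.append_assoc]

theorem stmt2 (n : ℕ) (hn : 3 ≤ n) : (pw n).reverse = pw n := by
  obtain ⟨m, rfl⟩ : ∃ m, n = m + 3 := ⟨n - 3, by omega⟩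
  exact (key m).1.2.2
end

section
/- For every n ≥ 1, the minimal forbidden word M_n of the Fibonacci word is a palindrome of length F_n (the n-th Fibonacci number), where M_{2n+1} = 1·p_{2n+1}·1 and M_{2n+2} = 0·p_{2n+2}·0. -/
section aux

lemma drop2_append (a l : List Bool) (h : 2 ≤ l.length) :
    (a ++ l).dropLast.dropLast = a ++ l.dropLast.dropLast := by
  have h1 : l ≠ [] := by rintro rfl; simp at h
  have h2 : l.dropLast ≠ [] := by
    intro hc
    have := l.length_dropLast
    rw [hc] at this
    simp at this; omega
  rw [List.dropLast_append_of_ne_nil h1, List.dropLast_append_of_ne_nil h2]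

lemma fw_len (n : ℕ) : (fw n).length = Nat.fib n := by
  induction n using Nat.strong_induction_on with
  | _ n ih =>
    match n with
    | 0 => rfl
    | 1 => rfl
    | 2 => rfl
    | (m+3) =>
      rw [fw, List.length_append, ih (m+2) (by omega), ih (m+1) (by omega),
        Nat.add_comm, ← Nat.fib_add_two]

lemma fw_len2 (n : ℕ) : 2 ≤ (fw (n+3)).length := by
  rw [fw_len]
  have : Nat.fib 3 ≤ Nat.fib (n+3) := Nat.fib_mono (by omega)
  exact le_trans (by decide) this

lemma fw_ne_nil (n : ℕ) : fw (n+1) ≠ [] := by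
  intro h
  have h1 := fw_len (n+1)
  rw [h] at h1
  have h2 : 0 < Nat.fib (n+1) := Nat.fib_pos.2 (by omega)
  simp at h1
  omega

/-- near commutation -/
lemma fw_comm (n : ℕ) :
    (fw (n+1) ++ fw (n+2)).dropLast.dropLast = (fw (n+2) ++ fw (n+1)).dropLast.dropLast := by
  induction n with
  | zero => rfl
  | succ m ih =>
    have h1 : fw (m+2) ++ fw (m+3) = fw (m+2) ++ (fw (m+2) ++ fw (m+1)) := by rw [fw]
    have h2 : fw (m+3) ++ fw (m+2) = fw (m+2) ++ (fw (m+1) ++ fw (m+2)) := by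
      rw [fw, List.append_assoc]
    have hl : 2 ≤ (fw (m+2) ++ fw (m+1)).length := by
      rw [List.length_append, fw_len, fw_len]
      have a1 : 1 ≤ Nat.fib (m+1) := Nat.fib_pos.2 (by omega)
      have a2 : 1 ≤ Nat.fib (m+2) := Nat.fib_pos.2 (by omega)
      omega
    have hl' : 2 ≤ (fw (m+1) ++ fw (m+2)).length := by
      rw [List.length_append] at hl ⊢; omega
    rw [h1, h2, drop2_append _ _ hl, drop2_append _ _ hl', ih]

lemma pw_rec1 (n : ℕ) : pw (n+5) = fw (n+4) ++ pw (n+3) := by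
  show (fw (n+5)).dropLast.dropLast = fw (n+4) ++ (fw (n+3)).dropLast.dropLast
  rw [show fw (n+5) = fw (n+4) ++ fw (n+3) from rfl, drop2_append _ _ (fw_len2 n)]

lemma pw_rec2 (n : ℕ) : pw (n+5) = fw (n+3) ++ pw (n+4) := by
  show (fw (n+5)).dropLast.dropLast = fw (n+3) ++ (fw (n+4)).dropLast.dropLast
  rw [show fw (n+5) = fw (n+4) ++ fw (n+3) from rfl, ← fw_comm (n+2),
    drop2_append _ _ (fw_len2 (n+1))]

/-- the removed tail -/
def tl (n : ℕ) : List Bool := if n % 2 = 1 then [false, true] else [true, false]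

lemma tl_rev (n : ℕ) : (tl (n+1)).reverse = tl n := by
  unfold tl
  rcases Nat.even_or_odd n with h | h
  · rw [Nat.even_iff] at h
    simp [Nat.add_mod, h]
  · rw [Nat.odd_iff] at h
    simp [Nat.add_mod, h]

lemma fw_tl : ∀ n, fw (n+3) = pw (n+3) ++ tl (n+3) := by
  have base3 : fw 3 = pw 3 ++ tl 3 := by decide
  have base4 : fw 4 = pw 4 ++ tl 4 := by decide
  intro n
  induction n using Nat.strong_induction_on with
  | _ n ih =>
    match n with
    | 0 => exact base3
    | 1 => exact base4
    | (m+2) =>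
      have htl : tl (m+5) = tl (m+3) := by
        unfold tl
        have : (m+5) % 2 = (m+3) % 2 := by omega
        rw [this]
      rw [pw_rec1, htl, List.append_assoc, ← ih m (by omega)]
      rfl

lemma pw_pal : ∀ n, (pw (n+3)).reverse = pw (n+3) := by
  have key : ∀ n, (pw (n+3)).reverse = pw (n+3) ∧ (pw (n+4)).reverse = pw (n+4) := by
    intro n
    induction n with
    | zero => constructor <;> decide
    | succ m ih =>
      refine ⟨ih.2, ?_⟩
      have ft : fw (m+4) = pw (m+4) ++ tl (m+4) := fw_tl (m+1)
      have tr : (tl (m+4)).reverse = tl (m+3) := tl_rev (m+3)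
      show (pw (m+5)).reverse = pw (m+5)
      calc (pw (m+5)).reverse = (fw (m+4) ++ pw (m+3)).reverse := by rw [← pw_rec1]
        _ = pw (m+3) ++ (pw (m+4) ++ tl (m+4)).reverse := by
              rw [List.reverse_append, ih.1, ft]
        _ = pw (m+3) ++ (tl (m+3) ++ pw (m+4)) := by
              rw [List.reverse_append, ih.2, tr]
        _ = fw (m+3) ++ pw (m+4) := by rw [← List.append_assoc, ← fw_tl m]
        _ = pw (m+5) := (pw_rec2 m).symm
  exact fun n => (key n).1

lemma pw_len (n : ℕ) : (pw (n+3)).length = Nat.fib (n+3) - 2 := by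
  show (fw (n+3)).dropLast.dropLast.length = _
  rw [List.length_dropLast, List.length_dropLast, fw_len]
  omega

lemma Mw_pal_len (n : ℕ) :
    (Mw (n+3)).reverse = Mw (n+3) ∧ (Mw (n+3)).length = Nat.fib (n+3) := by
  have hp := pw_pal n
  have hl := pw_len n
  have hf : 2 ≤ Nat.fib (n+3) := by
    have : Nat.fib 3 ≤ Nat.fib (n+3) := Nat.fib_mono (by omega)
    exact le_trans (by decide) this
  unfold Mw
  rcases Nat.even_or_odd (n+3) with h | h
  · rw [Nat.even_iff] at h
    simp only [h, if_pos rfl]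
    constructor
    · simp [hp]
    · simp [hl]; omega
  · rw [Nat.odd_iff] at h
    simp only [h]
    norm_num
    constructor
    · simp [hp]
    · simp [hl]; omega

end aux


theorem stmt3 (n : ℕ) (hn : 1 ≤ n) :
    (Mw (2*n+1)).reverse = Mw (2*n+1) ∧ (Mw (2*n+1)).length = Nat.fib (2*n+1) ∧
    (Mw (2*n+2)).reverse = Mw (2*n+2) ∧ (Mw (2*n+2)).length = Nat.fib (2*n+2) := by
  obtain ⟨m, rfl⟩ : ∃ m, n = m + 1 := ⟨n - 1, by omega⟩
  have h1 := Mw_pal_len (2*m)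
  have h2 := Mw_pal_len (2*m+1)
  have e1 : 2*(m+1)+1 = 2*m+3 := by ring
  have e2 : 2*(m+1)+2 = 2*m+1+3 := by ring
  rw [e1, e2]
  exact ⟨h1.1, h1.2, h2.1, h2.2⟩
end

section
/- For every n ≥ 1, φ(1·p_{2n+2}·1)·0 = 0·p_{2n+3}·0, where φ is the Fibonacci morphism. -/
lemma phi_append (u v : List Bool) : phi (u ++ v) = phi u ++ phi v := by
  simp [phi]

lemma phi_fw : ∀ n, phi (fw (n+1)) = fw (n+2) := by
  intro n
  induction n using Nat.strong_induction_on with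
  | _ n ih =>
    match n with
    | 0 => rfl
    | 1 => rfl
    | (m+2) =>
      show phi (fw (m+2) ++ fw (m+1)) = fw (m+3) ++ fw (m+2)
      rw [phi_append, ih (m+1) (by omega), ih m (by omega)]

lemma fw_suffix : ∀ n, 1 ≤ n →
    (∃ u, fw (2*n+2) = u ++ [true, false]) ∧
    (∃ v, fw (2*n+3) = v ++ [false, true]) := by
  intro n hn
  induction n with
  | zero => omega
  | succ m ih =>
    rcases Nat.eq_or_lt_of_le hn with h | h
    · have hm0 : m = 0 := by omega
      subst hm0
      exact ⟨⟨[false], by decide⟩, ⟨[false, true, false], by decide⟩⟩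
    · have hm : 1 ≤ m := by omega
      obtain ⟨⟨u, hu⟩, ⟨v, hv⟩⟩ := ih hm
      constructor
      · refine ⟨fw (2*m+3) ++ u, ?_⟩
        have : 2*(m+1)+2 = (2*m+1)+3 := by ring
        rw [this, fw, hu]
        · simp [show 2*m+1+2 = 2*m+3 from by ring, show 2*m+1+1 = 2*m+2 from rfl]
      · refine ⟨fw (2*(m+1)+2) ++ v, ?_⟩
        have : 2*(m+1)+3 = (2*m+2)+3 := by ring
        rw [this, fw, hv]
        · simp [show 2*m+2+2 = 2*(m+1)+2 from by ring, show 2*m+2+1 = 2*m+3 from rfl]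

lemma dropLast_two (u : List Bool) (a b : Bool) :
    ((u ++ [a, b]).dropLast.dropLast) = u := by
  have : u ++ [a, b] = (u ++ [a]) ++ [b] := by simp
  rw [this, List.dropLast_concat, List.dropLast_concat]

theorem stmt4 (n : ℕ) (hn : 1 ≤ n) :
    phi (true :: (pw (2*n+2) ++ [true])) ++ [false]
      = false :: (pw (2*n+3) ++ [false]) := by
  obtain ⟨⟨u, hu⟩, ⟨v, hv⟩⟩ := fw_suffix n hn
  have hpu : pw (2*n+2) = u := by rw [pw, hu, dropLast_two]
  have hpv : pw (2*n+3) = v := by rw [pw, hv, dropLast_two]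
  have hphi : phi (fw (2*n+2)) = fw (2*n+3) := phi_fw (2*n+1)
  rw [hu, hv, phi_append] at hphi
  have key : phi u ++ [false] = v := by
    have h2 : (phi u ++ [false]) ++ [false, true] = v ++ [false, true] := by
      simpa [phi] using hphi
    exact List.append_cancel_right h2
  rw [hpu, hpv, ← key]
  show phi ([true] ++ u ++ [true]) ++ [false] = _
  rw [phi_append, phi_append]
  simp [phi]
end

section
/- Let u and v be palindromes of lengths n ≤ m. Then for every k ∈ [0,n), C_{u,v}[k] = C_{v,u}[m−n+k]; i.e., the correlation of u over v is the length-n suffix of the correlation of v over u. -/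
theorem palget {α : Type*} (w : List α) (hw : w.reverse = w) (i : ℕ) (hi : i < w.length) :
    w[i]? = w[w.length - 1 - i]? := by
  conv_lhs => rw [← hw]
  rw [List.getElem?_reverse]
  exact hi

theorem stmt9 {α : Type*} (u v : List α) (hu : u.reverse = u) (hv : v.reverse = v)
    (h : u.length ≤ v.length) (k : ℕ) (hk : k < u.length) :
    corr u v k ↔ corr v u (v.length - u.length + k) := by
  have hn := hk
  constructor
  · intro hc i j hi hj hij
    have hjlt : j + k < u.length := by omega
    have h1 := hc (u.length - 1 - j) (u.length - 1 - j - k) (by omega) (by omega) (by omega)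
    have h2 := palget u hu (u.length - 1 - j) (by omega)
    have h3 := palget v hv (u.length - 1 - j - k) (by omega)
    rw [h2] at h1
    rw [h3] at h1
    have e1 : u.length - 1 - (u.length - 1 - j) = j := by omega
    have e2 : v.length - 1 - (u.length - 1 - j - k) = i := by omega
    rw [e1, e2] at h1
    exact h1.symm
  · intro hc i j hi hj hij
    have hjlt : j + k < u.length := by omega
    have h1 := hc (v.length - 1 - j) (u.length - 1 - j - k) (by omega) (by omega) (by omega)
    have h2 := palget v hv (v.length - 1 - j) (by omega)
    have h3 := palget u hu (u.length - 1 - j - k) (by omega)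
    rw [h2] at h1
    rw [h3] at h1
    have e1 : v.length - 1 - (v.length - 1 - j) = j := by omega
    have e2 : u.length - 1 - (u.length - 1 - j - k) = i := by omega
    rw [e1, e2] at h1
    exact h1.symm
end

section
/- For 1 ≤ n < m, the set of common nonempty borders of M_{2n+1} and M_{2m+1} equals B_{2n+1} \ {M_{2n+1}}, and the set of common nonempty borders of M_{2n+2} and M_{2m+2} equals B_{2n+2} \ {M_{2n+2}}; i.e., every proper nonempty border of the shorter word is a border of the longer word of the same parity. -/
lemma fw_rec (j : ℕ) : fw (j+3) = fw (j+2) ++ fw (j+1) := rfl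

lemma dropLast2_append (x : List Bool) (a b : Bool) :
    ((x ++ [a, b]).dropLast).dropLast = x := by
  have : x ++ [a, b] = (x ++ [a]) ++ [b] := by simp
  rw [this, List.dropLast_concat, List.dropLast_concat]

lemma fw_tail : ∀ k : ℕ, fw (2*k+3) = pw (2*k+3) ++ [false, true] ∧
    fw (2*k+4) = pw (2*k+4) ++ [true, false] := by
  intro k
  induction k with
  | zero => constructor <;> decide
  | succ k ih =>
    obtain ⟨h1, h2⟩ := ih
    have e1 : fw (2*(k+1)+3) = fw (2*k+4) ++ fw (2*k+3) := by
      have : 2*(k+1)+3 = (2*k+2)+3 := by ring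
      rw [this, fw_rec]
    have e2 : fw (2*(k+1)+4) = fw (2*(k+1)+3) ++ fw (2*k+4) := by
      have : 2*(k+1)+4 = (2*k+3)+3 := by ring
      rw [this, fw_rec]
      congr 2 <;> omega
    have p1 : pw (2*(k+1)+3) = fw (2*k+4) ++ pw (2*k+3) := by
      rw [pw, e1, h1, ← List.append_assoc, dropLast2_append]
    have p2 : pw (2*(k+1)+4) = fw (2*(k+1)+3) ++ pw (2*k+4) := by
      rw [pw, e2, h2, ← List.append_assoc, dropLast2_append]
    refine ⟨?_, ?_⟩
    · rw [e1, p1, h1, List.append_assoc]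
    · rw [e2, p2, h2, List.append_assoc]

lemma pw_step_odd (k : ℕ) : pw (2*(k+1)+3) = fw (2*k+4) ++ pw (2*k+3) := by
  have h1 := (fw_tail k).1
  have e1 : fw (2*(k+1)+3) = fw (2*k+4) ++ fw (2*k+3) := by
    have : 2*(k+1)+3 = (2*k+2)+3 := by ring
    rw [this, fw_rec]
  rw [pw, e1, h1, ← List.append_assoc, dropLast2_append]

lemma pw_step_even (k : ℕ) : pw (2*(k+1)+4) = fw (2*(k+1)+3) ++ pw (2*k+4) := by
  have h2 := (fw_tail k).2
  have e2 : fw (2*(k+1)+4) = fw (2*(k+1)+3) ++ fw (2*k+4) := by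
    have : 2*(k+1)+4 = (2*k+3)+3 := by ring
    rw [this, fw_rec]
    congr 2 <;> omega
  rw [pw, e2, h2, ← List.append_assoc, dropLast2_append]

lemma pw_suffix_odd {a b : ℕ} (h : a ≤ b) : pw (2*a+3) <:+ pw (2*b+3) := by
  induction b with
  | zero => interval_cases a; exact List.suffix_rfl
  | succ b ih =>
    rcases Nat.lt_or_ge a (b+1) with h' | h'
    · exact (ih (Nat.lt_succ_iff.mp h')).trans (pw_step_odd b ▸ List.suffix_append _ _)
    · have : a = b + 1 := le_antisymm h h'
      subst this; exact List.suffix_rfl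

lemma pw_suffix_even {a b : ℕ} (h : a ≤ b) : pw (2*a+4) <:+ pw (2*b+4) := by
  induction b with
  | zero => interval_cases a; exact List.suffix_rfl
  | succ b ih =>
    rcases Nat.lt_or_ge a (b+1) with h' | h'
    · exact (ih (Nat.lt_succ_iff.mp h')).trans (pw_step_even b ▸ List.suffix_append _ _)
    · have : a = b + 1 := le_antisymm h h'
      subst this; exact List.suffix_rfl

lemma fw_prefix {a b : ℕ} (ha : 2 ≤ a) (h : a ≤ b) : fw a <+: fw b := by
  induction b with
  | zero => omega
  | succ b ih =>
    rcases Nat.lt_or_ge a (b+1) with h' | h'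
    · have : fw (b+1) = fw b ++ fw (b-1) := by
        obtain ⟨c, rfl⟩ : ∃ c, b = c + 2 := ⟨b - 2, by omega⟩
        exact fw_rec c
      exact (ih (by omega)).trans (this ▸ List.prefix_append _ _)
    · have : a = b + 1 := le_antisymm h h'
      subst this; exact List.prefix_rfl

lemma fw_length_pos {a : ℕ} (ha : 1 ≤ a) : 0 < (fw a).length := by
  induction a using Nat.strong_induction_on with
  | _ a ih =>
    match a, ha with
    | 1, _ => decide
    | 2, _ => decide
    | (c+3), _ =>
      rw [fw_rec]
      have := ih (c+2) (by omega) (by omega)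
      simp [List.length_append]; omega

lemma pw_length (a : ℕ) : (pw a).length = (fw a).length - 2 := by
  simp [pw]; omega

lemma pw_prefix_fw (a : ℕ) : pw a <+: fw a :=
  (List.dropLast_prefix _).trans (List.dropLast_prefix _)

/-- key strict-prefix extension, odd case -/
lemma ext_prefix_odd {n m : ℕ} (hn : 1 ≤ n) (hnm : n < m) :
    pw (2*n+1) ++ [false] <+: pw (2*m+1) := by
  obtain ⟨k, rfl⟩ : ∃ k, n = k + 1 := ⟨n - 1, by omega⟩
  obtain ⟨l, rfl⟩ : ∃ l, m = l + 1 := ⟨m - 1, by omega⟩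
  have en : 2*(k+1)+1 = 2*k+3 := by ring
  have em : 2*(l+1)+1 = 2*l+3 := by ring
  rw [en, em]
  have h1 : pw (2*k+3) ++ [false] <+: fw (2*k+3) := by
    rw [(fw_tail k).1]
    refine ⟨[true], by simp⟩
  have h2 : fw (2*k+3) <+: fw (2*l+3) := fw_prefix (by omega) (by omega)
  have h3 : pw (2*l+3) <+: fw (2*l+3) := pw_prefix_fw _
  refine List.prefix_of_prefix_length_le (h1.trans h2) h3 ?_
  -- length bound
  have lk := (fw_tail k).1
  have ll := (fw_tail l).1
  have hfl : (fw (2*k+3)).length + 1 ≤ (fw (2*l+3)).length := by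
    have hle : fw (2*k+3+2) <+: fw (2*l+3) := fw_prefix (by omega) (by omega)
    have : fw (2*k+3+2) = fw (2*k+4) ++ fw (2*k+3) := by
      have : 2*k+3+2 = (2*k+2)+3 := by ring
      rw [this, fw_rec]
    have hpos : 0 < (fw (2*k+4)).length := fw_length_pos (by omega)
    have := hle.length_le
    rw [‹fw (2*k+3+2) = _›] at this
    simp [List.length_append] at this
    omega
  have e1 : (fw (2*k+3)).length = (pw (2*k+3)).length + 2 := by rw [lk]; simp
  have e2 : (fw (2*l+3)).length = (pw (2*l+3)).length + 2 := by rw [ll]; simp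
  simp [List.length_append]
  omega

/-- key strict-prefix extension, even case -/
lemma ext_prefix_even {n m : ℕ} (hn : 1 ≤ n) (hnm : n < m) :
    pw (2*n+2) ++ [true] <+: pw (2*m+2) := by
  obtain ⟨k, rfl⟩ : ∃ k, n = k + 1 := ⟨n - 1, by omega⟩
  obtain ⟨l, rfl⟩ : ∃ l, m = l + 1 := ⟨m - 1, by omega⟩
  have en : 2*(k+1)+2 = 2*k+4 := by ring
  have em : 2*(l+1)+2 = 2*l+4 := by ring
  rw [en, em]
  have h1 : pw (2*k+4) ++ [true] <+: fw (2*k+4) := by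
    rw [(fw_tail k).2]
    refine ⟨[false], by simp⟩
  have h2 : fw (2*k+4) <+: fw (2*l+4) := fw_prefix (by omega) (by omega)
  have h3 : pw (2*l+4) <+: fw (2*l+4) := pw_prefix_fw _
  refine List.prefix_of_prefix_length_le (h1.trans h2) h3 ?_
  have lk := (fw_tail k).2
  have ll := (fw_tail l).2
  have hfl : (fw (2*k+4)).length + 1 ≤ (fw (2*l+4)).length := by
    have hle : fw (2*k+4+2) <+: fw (2*l+4) := fw_prefix (by omega) (by omega)
    have : fw (2*k+4+2) = fw (2*k+5) ++ fw (2*k+4) := by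
      have : 2*k+4+2 = (2*k+3)+3 := by ring
      rw [this, fw_rec]
    have hpos : 0 < (fw (2*k+5)).length := fw_length_pos (by omega)
    have := hle.length_le
    rw [‹fw (2*k+4+2) = _›] at this
    simp [List.length_append] at this
    omega
  have e1 : (fw (2*k+4)).length = (pw (2*k+4)).length + 2 := by rw [lk]; simp
  have e2 : (fw (2*l+4)).length = (pw (2*l+4)).length + 2 := by rw [ll]; simp
  simp [List.length_append]
  omega

/-- generic borders lemma -/
lemma generic (c : Bool) (p q : List Bool)
    (hpq : p <+: q) (hsq : p <:+ q) (hext : p ++ [!c] <+: q) :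
    {b : List Bool | b ≠ [] ∧ IsBorder b (c :: (p ++ [c])) ∧ IsBorder b (c :: (q ++ [c]))}
      = {b : List Bool | b ≠ [] ∧ IsBorder b (c :: (p ++ [c]))} \ {c :: (p ++ [c])} := by
  set M1 := c :: (p ++ [c]) with hM1
  set M2 := c :: (q ++ [c]) with hM2
  ext b
  simp only [Set.mem_setOf_eq, Set.mem_diff, Set.mem_singleton_iff]
  constructor
  · rintro ⟨hb, h1, h2⟩
    refine ⟨⟨hb, h1⟩, ?_⟩
    rintro rfl
    -- M1 <+: M2 is impossible
    have hpre : M1 <+: M2 := h2.1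
    rw [hM1, hM2, List.cons_prefix_cons] at hpre
    have hA : p ++ [c] <+: q ++ [c] := hpre.2
    have hB : p ++ [!c] <+: q ++ [c] := hext.trans (List.prefix_append _ _)
    have heq : p ++ [c] = p ++ [!c] :=
      (List.prefix_of_prefix_length_le hA hB (by simp)).eq_of_length (by simp)
    have : c = !c := by simpa using heq
    simp at this
  · rintro ⟨⟨hb, h1⟩, hne⟩
    refine ⟨hb, h1, ?_, ?_⟩
    · -- prefix of M2
      have hlt : b.length < M1.length := by
        rcases lt_or_eq_of_le h1.1.length_le with h | h
        · exact h
        · exact absurd (h1.1.eq_of_length h) hne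
      have hb1 : b <+: c :: p := by
        have hdp : (c :: p) <+: M1 := by
          have : M1 = (c :: p) ++ [c] := by simp [hM1]
          rw [this]; exact List.prefix_append _ _
        refine List.prefix_of_prefix_length_le h1.1 hdp ?_
        simp [hM1] at hlt ⊢; omega
      have : (c :: p) <+: M2 := by
        rw [hM2, List.cons_prefix_cons]
        exact ⟨rfl, hpq.trans (List.prefix_append _ _)⟩
      exact hb1.trans this
    · -- suffix of M2
      have hlt : b.length < M1.length := by
        rcases lt_or_eq_of_le h1.1.length_le with h | h
        · exact h
        · exact absurd (h1.1.eq_of_length h) hne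
      have hb1 : b <:+ p ++ [c] := by
        have hdp : (p ++ [c]) <:+ M1 := by
          rw [hM1]; exact List.suffix_cons _ _
        refine List.suffix_of_suffix_length_le h1.2 hdp ?_
        simp [hM1] at hlt ⊢; omega
      have h2 : p ++ [c] <:+ q ++ [c] := by
        obtain ⟨u, hu⟩ := hsq
        exact ⟨u, by rw [← hu, List.append_assoc]⟩
      have h3 : q ++ [c] <:+ M2 := by rw [hM2]; exact List.suffix_cons _ _
      exact hb1.trans (h2.trans h3)

theorem stmt18 (n m : ℕ) (hn : 1 ≤ n) (hnm : n < m) :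
    {b : List Bool | b ≠ [] ∧ IsBorder b (Mw (2*n+1)) ∧ IsBorder b (Mw (2*m+1))}
      = Bset (2*n+1) \ {Mw (2*n+1)} ∧
    {b : List Bool | b ≠ [] ∧ IsBorder b (Mw (2*n+2)) ∧ IsBorder b (Mw (2*m+2))}
      = Bset (2*n+2) \ {Mw (2*n+2)} := by
  have unf_odd : ∀ j, Mw (2*j+1) = true :: (pw (2*j+1) ++ [true]) := by
    intro j; rw [Mw, if_neg (by omega)]
  have unf_even : ∀ j, Mw (2*j+2) = false :: (pw (2*j+2) ++ [false]) := by
    intro j; rw [Mw, if_pos (by omega)]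
  obtain ⟨k, hk⟩ : ∃ k, n = k + 1 := ⟨n - 1, by omega⟩
  obtain ⟨l, hl⟩ : ∃ l, m = l + 1 := ⟨m - 1, by omega⟩
  constructor
  · rw [unf_odd n, unf_odd m]
    have hpq : pw (2*n+1) <+: pw (2*m+1) := by
      refine List.prefix_of_prefix_length_le ((pw_prefix_fw _).trans (fw_prefix (by omega) (by omega)))
        (pw_prefix_fw _) ?_
      have := (fw_prefix (a := 2*n+1) (b := 2*m+1) (by omega) (by omega)).length_le
      rw [pw_length, pw_length]; omega
    have hsq : pw (2*n+1) <:+ pw (2*m+1) := by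
      have := pw_suffix_odd (a := k) (b := l) (by omega)
      have e1 : 2*n+1 = 2*k+3 := by omega
      have e2 : 2*m+1 = 2*l+3 := by omega
      rw [e1, e2]; exact this
    have hext : pw (2*n+1) ++ [!true] <+: pw (2*m+1) := by
      simpa using ext_prefix_odd hn hnm
    have := generic true (pw (2*n+1)) (pw (2*m+1)) hpq hsq hext
    rw [this, Bset, unf_odd n]
  · rw [unf_even n, unf_even m]
    have hpq : pw (2*n+2) <+: pw (2*m+2) := by
      refine List.prefix_of_prefix_length_le ((pw_prefix_fw _).trans (fw_prefix (by omega) (by omega)))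
        (pw_prefix_fw _) ?_
      have := (fw_prefix (a := 2*n+2) (b := 2*m+2) (by omega) (by omega)).length_le
      rw [pw_length, pw_length]; omega
    have hsq : pw (2*n+2) <:+ pw (2*m+2) := by
      have := pw_suffix_even (a := k) (b := l) (by omega)
      have e1 : 2*n+2 = 2*k+4 := by omega
      have e2 : 2*m+2 = 2*l+4 := by omega
      rw [e1, e2]; exact this
    have hext : pw (2*n+2) ++ [!false] <+: pw (2*m+2) := by
      simpa using ext_prefix_even hn hnm
    have := generic false (pw (2*n+2)) (pw (2*m+2)) hpq hsq hext
    rw [this, Bset, unf_even n]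
end
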